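/- Let j ≥ 1, let ε ∈ {1, −1}, let n ≥ 1, and let C be a symmetric n×n integer matrix with det C = 3 whose minor C' (obtained by deleting the first row and column) has det C' = ε·2^j. Let A be the (n+2)×(n+2) symmetric integer matrix whose upper-left 2×2 block is diag(ε·2^j, ε·2^j), whose entries A(1,3) = A(2,3) = A(3,1) = A(3,2) = 1, whose other entries in the first two rows and columns are 0, and whose lower-right n×n block is C. Then det A = 2^{2j}, and over the rationals the inverse matrix satisfies (A⁻¹)(1,1) = (A⁻¹)(2,2) = ε·2^{1−j} and (A⁻¹)(1,2) = ε·2^{−j}. -/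

import Mathlib

section Stmt7Aux

private lemma stmt7_sA1_0 {m : ℕ} : (1 : Fin (m+2)).succAbove 0 = 0 := by
  apply Fin.ext; simp [Fin.succAbove, Fin.lt_def, apply_ite Fin.val]

private lemma stmt7_sA1_s {m : ℕ} (k : Fin m) :
    (1 : Fin (m+2)).succAbove k.succ = k.succ.succ := by
  apply Fin.ext; simp [Fin.succAbove, Fin.lt_def, apply_ite Fin.val]

private lemma stmt7_sA2_0 {m : ℕ} : (2 : Fin (m+3)).succAbove 0 = 0 := by
  apply Fin.ext; simp [Fin.succAbove, Fin.lt_def, apply_ite Fin.val, Nat.mod_eq_of_lt (show 2 < m + 2 + 1 by omega)]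

private lemma stmt7_sA2_1 {m : ℕ} : (2 : Fin (m+3)).succAbove 1 = 1 := by
  apply Fin.ext; simp [Fin.succAbove, Fin.lt_def, apply_ite Fin.val, Nat.mod_eq_of_lt (show 2 < m + 2 + 1 by omega)]

private lemma stmt7_sA2_s {m : ℕ} (k : Fin m) :
    (2 : Fin (m+3)).succAbove k.succ.succ = k.succ.succ.succ := by
  apply Fin.ext; simp [Fin.succAbove, Fin.lt_def, apply_ite Fin.val, Nat.mod_eq_of_lt (show 2 < m + 1 + 1 + 1 by omega)]

private lemma stmt7_aux1 {m : ℕ} {R : Type*} [CommRing R] (M : Matrix (Fin (m+1)) (Fin (m+1)) R)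
    (h0 : ∀ i, M i 0 = if i = 0 then 1 else 0) :
    M.det = (M.submatrix Fin.succ Fin.succ).det := by
  rw [Matrix.det_succ_column_zero]
  rw [Fintype.sum_eq_single 0]
  · simp [h0, Fin.succAbove_zero]
  · intro i hi
    simp [h0, hi]

private lemma stmt7_aux2 {m : ℕ} {R : Type*} [CommRing R] (M : Matrix (Fin (m+2)) (Fin (m+2)) R)
    (C : Matrix (Fin (m+1)) (Fin (m+1)) R) (a : R)
    (h00 : M 0 0 = a)
    (hr : ∀ k : Fin (m+1), M 0 k.succ = if k = 0 then 1 else 0)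
    (hc : ∀ i : Fin (m+1), M i.succ 0 = if i = 0 then 1 else 0)
    (hb : ∀ i k, M i.succ k.succ = C i k) :
    M.det = a * C.det - (C.submatrix Fin.succ Fin.succ).det := by
  rw [Matrix.det_succ_row_zero, Fin.sum_univ_succ, Fin.sum_univ_succ]
  have e1 : M.submatrix Fin.succ ((0 : Fin (m+2)).succAbove) = C := by
    ext i k
    simp [Fin.succAbove_zero, hb]
  have e2 : (M.submatrix Fin.succ (((0 : Fin (m+1)).succ).succAbove)).det
      = (C.submatrix Fin.succ Fin.succ).det := by
    rw [stmt7_aux1]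
    · congr 1
      ext i k
      simp only [Matrix.submatrix_apply]
      rw [Fin.succ_zero_eq_one, stmt7_sA1_s, hb]
    · intro i
      simp only [Matrix.submatrix_apply]
      rw [Fin.succ_zero_eq_one, stmt7_sA1_0, hc]
  have e3 : ∀ k : Fin m, M 0 (k.succ.succ) = 0 := by
    intro k
    rw [hr k.succ, if_neg (Fin.succ_ne_zero k)]
  rw [e1, e2, h00]
  rw [hr 0, if_pos rfl]
  simp only [e3, mul_zero, zero_mul, Finset.sum_const_zero]
  simp
  ring

/-- The four determinants: `det A`, and the three minors needed for the adjugate. -/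
private lemma stmt7_main {m : ℕ} {R : Type*} [CommRing R] (d : R)
    (C : Matrix (Fin (m+1)) (Fin (m+1)) R)
    (A : Matrix (Fin (m+3)) (Fin (m+3)) R)
    (h00 : A 0 0 = d) (h11 : A 1 1 = d) (h01 : A 0 1 = 0) (h10 : A 1 0 = 0)
    (hrow0 : ∀ k : Fin (m+1), A 0 k.succ.succ = if k = 0 then 1 else 0)
    (hrow1 : ∀ k : Fin (m+1), A 1 k.succ.succ = if k = 0 then 1 else 0)
    (hcol0 : ∀ i : Fin (m+1), A i.succ.succ 0 = if i = 0 then 1 else 0)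
    (hcol1 : ∀ i : Fin (m+1), A i.succ.succ 1 = if i = 0 then 1 else 0)
    (hblock : ∀ i k : Fin (m+1), A i.succ.succ k.succ.succ = C i k) :
    A.det = d * (d * C.det - (C.submatrix Fin.succ Fin.succ).det)
        - d * (C.submatrix Fin.succ Fin.succ).det ∧
    (A.submatrix Fin.succ Fin.succ).det
        = d * C.det - (C.submatrix Fin.succ Fin.succ).det ∧
    (A.submatrix ((1 : Fin (m+3)).succAbove) ((1 : Fin (m+3)).succAbove)).det
        = d * C.det - (C.submatrix Fin.succ Fin.succ).det ∧
    (A.submatrix ((1 : Fin (m+3)).succAbove) Fin.succ).det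
        = - (C.submatrix Fin.succ Fin.succ).det := by
  have hm00 : (A.submatrix Fin.succ Fin.succ).det
      = d * C.det - (C.submatrix Fin.succ Fin.succ).det := by
    apply stmt7_aux2
    · simpa [Fin.succ_zero_eq_one] using h11
    · intro k; simpa [Fin.succ_zero_eq_one] using hrow1 k
    · intro i; simpa [Fin.succ_zero_eq_one] using hcol1 i
    · intro i k; exact hblock i k
  have hm11 : (A.submatrix ((1 : Fin (m+3)).succAbove) ((1 : Fin (m+3)).succAbove)).det
      = d * C.det - (C.submatrix Fin.succ Fin.succ).det := by
    apply stmt7_aux2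
    · simpa [stmt7_sA1_0] using h00
    · intro k; simpa [stmt7_sA1_0, stmt7_sA1_s] using hrow0 k
    · intro i; simpa [stmt7_sA1_0, stmt7_sA1_s] using hcol0 i
    · intro i k; simpa [stmt7_sA1_s] using hblock i k
  have hm10 : (A.submatrix ((1 : Fin (m+3)).succAbove) Fin.succ).det
      = - (C.submatrix Fin.succ Fin.succ).det := by
    have := stmt7_aux2 (A.submatrix ((1 : Fin (m+3)).succAbove) Fin.succ) C 0
      (by simpa [stmt7_sA1_0, Fin.succ_zero_eq_one] using h01)
      (fun k => by simpa [stmt7_sA1_0, Fin.succ_zero_eq_one] using hrow0 k)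
      (fun i => by simpa [stmt7_sA1_s, Fin.succ_zero_eq_one] using hcol1 i)
      (fun i k => by simpa [stmt7_sA1_s] using hblock i k)
    simpa using this
  refine ⟨?_, hm00, hm11, hm10⟩
  -- determinant of A: expand along row 0
  have hR : (A.submatrix Fin.succ ((2 : Fin (m+3)).succAbove)).det
      = - (d * (C.submatrix Fin.succ Fin.succ).det) := by
    set Rm := A.submatrix Fin.succ ((2 : Fin (m+3)).succAbove) with hRm
    have hS : (Rm.submatrix Fin.succ ((1 : Fin (m+2)).succAbove)).det
        = (C.submatrix Fin.succ Fin.succ).det := by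
      rw [stmt7_aux1]
      · congr 1
        ext i k
        simp only [Matrix.submatrix_apply, hRm]
        rw [stmt7_sA1_s, stmt7_sA2_s, hblock]
      · intro i
        simp only [Matrix.submatrix_apply, hRm]
        rw [stmt7_sA1_0, stmt7_sA2_0, hcol0]
    rw [Matrix.det_succ_row_zero, Fin.sum_univ_succ, Fin.sum_univ_succ]
    have e0 : Rm 0 0 = 0 := by
      simp only [Matrix.submatrix_apply, hRm]
      rw [stmt7_sA2_0]
      simpa [Fin.succ_zero_eq_one] using h10
    have e1 : Rm 0 ((0 : Fin (m+1)).succ) = d := by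
      simp only [Fin.succ_zero_eq_one, Matrix.submatrix_apply, hRm]
      rw [stmt7_sA2_1]
      exact h11
    have e3 : ∀ k : Fin m, Rm 0 (k.succ.succ) = 0 := by
      intro k
      simp only [Matrix.submatrix_apply, hRm]
      rw [stmt7_sA2_s]
      have := hrow1 k.succ
      rw [if_neg (Fin.succ_ne_zero k)] at this
      simpa [Fin.succ_zero_eq_one] using this
    rw [e0, e1]
    simp only [e3, mul_zero, zero_mul, Finset.sum_const_zero]
    rw [Fin.succ_zero_eq_one, hS]
    simp
  rw [Matrix.det_succ_row_zero, Fin.sum_univ_succ, Fin.sum_univ_succ, Fin.sum_univ_succ]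
  have f0 : A.submatrix Fin.succ ((0 : Fin (m+3)).succAbove) = A.submatrix Fin.succ Fin.succ := by
    rw [Fin.succAbove_zero]
  have g1 : A 0 ((0 : Fin (m+2)).succ) = 0 := by
    simpa [Fin.succ_zero_eq_one] using h01
  have g2 : A 0 ((0 : Fin (m+1)).succ.succ) = 1 := by
    simpa using hrow0 0
  have g3 : ∀ k : Fin m, A 0 (k.succ.succ.succ) = 0 := by
    intro k
    have := hrow0 k.succ
    rw [if_neg (Fin.succ_ne_zero k)] at this
    exact this
  have hcast : ((0 : Fin (m+1)).succ.succ : Fin (m+3)) = 2 := by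
    apply Fin.ext
    simp
  rw [g1, h00, f0, hm00]
  simp only [g3, mul_zero, zero_mul, Finset.sum_const_zero]
  rw [hcast] at g2 ⊢
  rw [g2, hR]
  have : ((2 : Fin (m+3)) : ℕ) = 2 := rfl
  rw [this]
  simp
  ring

end Stmt7Aux

private lemma stmt7_detmap {m : ℕ} (C : Matrix (Fin m) (Fin m) ℤ) :
    (C.map (Int.cast : ℤ → ℚ)).det = ((C.det : ℤ) : ℚ) := by
  simpa using (RingHom.map_det (Int.castRingHom ℚ) C).symm

theorem stmt_7 (j : ℕ) (hj : 1 ≤ j) (ε : ℤ) (hε : ε = 1 ∨ ε = -1)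
    (n : ℕ) (C : Matrix (Fin (n + 1)) (Fin (n + 1)) ℤ) (hCsymm : C.IsSymm)
    (hCdet : C.det = 3)
    (hC'det : (C.submatrix Fin.succ Fin.succ).det = ε * 2 ^ j)
    (A : Matrix (Fin (n + 3)) (Fin (n + 3)) ℤ)
    (h00 : A 0 0 = ε * 2 ^ j) (h11 : A 1 1 = ε * 2 ^ j) (h01 : A 0 1 = 0) (h10 : A 1 0 = 0)
    (hrow0 : ∀ k : Fin (n + 1), A 0 k.succ.succ = if k = 0 then 1 else 0)
    (hrow1 : ∀ k : Fin (n + 1), A 1 k.succ.succ = if k = 0 then 1 else 0)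
    (hcol0 : ∀ i : Fin (n + 1), A i.succ.succ 0 = if i = 0 then 1 else 0)
    (hcol1 : ∀ i : Fin (n + 1), A i.succ.succ 1 = if i = 0 then 1 else 0)
    (hblock : ∀ i k : Fin (n + 1), A i.succ.succ k.succ.succ = C i k) :
    A.det = 2 ^ (2 * j) ∧
    (A.map (Int.cast : ℤ → ℚ))⁻¹ 0 0 = (ε : ℚ) * (2 / 2 ^ j) ∧
    (A.map (Int.cast : ℤ → ℚ))⁻¹ 1 1 = (ε : ℚ) * (2 / 2 ^ j) ∧
    (A.map (Int.cast : ℤ → ℚ))⁻¹ 0 1 = (ε : ℚ) / 2 ^ j := by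
  -- the integer determinant
  obtain ⟨HdetZ, -, -, -⟩ := stmt7_main (ε * 2 ^ j) C A h00 h11 h01 h10
    hrow0 hrow1 hcol0 hcol1 hblock
  have hdetA : A.det = 2 ^ (2 * j) := by
    rw [HdetZ, hCdet, hC'det, two_mul, pow_add]
    rcases hε with h | h <;> rw [h] <;> ring
  refine ⟨hdetA, ?_⟩
  -- rational side
  set Aq := A.map (Int.cast : ℤ → ℚ) with hAq
  set Cq := C.map (Int.cast : ℤ → ℚ) with hCq
  have hCqdet : Cq.det = 3 := by rw [hCq, stmt7_detmap, hCdet]; norm_num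
  have hCq'det : (Cq.submatrix Fin.succ Fin.succ).det = (ε : ℚ) * 2 ^ j := by
    have : Cq.submatrix Fin.succ Fin.succ
        = (C.submatrix Fin.succ Fin.succ).map (Int.cast : ℤ → ℚ) := rfl
    rw [this, stmt7_detmap, hC'det]
    push_cast
    ring
  obtain ⟨HdetQ, Hm00, Hm11, Hm10⟩ := stmt7_main ((ε : ℚ) * 2 ^ j) Cq Aq
    (by simp [hAq, Matrix.map_apply, h00])
    (by simp [hAq, Matrix.map_apply, h11])
    (by simp [hAq, Matrix.map_apply, h01])
    (by simp [hAq, Matrix.map_apply, h10])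
    (fun k => by simp [hAq, Matrix.map_apply, hrow0 k, apply_ite (Int.cast : ℤ → ℚ)])
    (fun k => by simp [hAq, Matrix.map_apply, hrow1 k, apply_ite (Int.cast : ℤ → ℚ)])
    (fun i => by simp [hAq, Matrix.map_apply, hcol0 i, apply_ite (Int.cast : ℤ → ℚ)])
    (fun i => by simp [hAq, Matrix.map_apply, hcol1 i, apply_ite (Int.cast : ℤ → ℚ)])
    (fun i k => by simp [hAq, hCq, Matrix.map_apply, hblock i k])
  rw [hCqdet] at HdetQ Hm00 Hm11
  rw [hCq'det] at HdetQ Hm00 Hm11 Hm10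
  have hdq : Aq.det = ((ε : ℚ) * 2 ^ j) ^ 2 := by rw [HdetQ]; ring
  have h2j : (2 : ℚ) ^ j ≠ 0 := by positivity
  have hadj00 : Aq.adjugate 0 0 = (ε : ℚ) * 2 ^ j * 3 - (ε : ℚ) * 2 ^ j := by
    rw [Matrix.adjugate_fin_succ_eq_det_submatrix]
    simp only [Fin.succAbove_zero]
    rw [Hm00]
    simp
  have hadj11 : Aq.adjugate 1 1 = (ε : ℚ) * 2 ^ j * 3 - (ε : ℚ) * 2 ^ j := by
    rw [Matrix.adjugate_fin_succ_eq_det_submatrix]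
    rw [Hm11]
    norm_num
  have hadj01 : Aq.adjugate 0 1 = (ε : ℚ) * 2 ^ j := by
    rw [Matrix.adjugate_fin_succ_eq_det_submatrix]
    simp only [Fin.succAbove_zero]
    rw [Hm10]
    norm_num
  have hinv : ∀ i k : Fin (n + 3), Aq⁻¹ i k = (Aq.det)⁻¹ * Aq.adjugate i k := by
    intro i k
    rw [Matrix.inv_def, Ring.inverse_eq_inv']
    simp [Matrix.smul_apply]
  refine ⟨?_, ?_, ?_⟩ <;>
    rw [hinv, hdq] <;>
    [rw [hadj00]; rw [hadj11]; rw [hadj01]] <;>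
    rcases hε with h | h <;> rw [h] <;> push_cast <;> field_simp <;> ring
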